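/- Let w = x_{i_1}⋯x_{i_n} be a positive normal form (so i_1 ≤ ⋯ ≤ i_n) and let i ≥ 0. Then the letter x_i skips over w if and only if i_j < i + j - 1 for all j = 1,…,n. Consequently, if x_i skips over w, then x_k skips over w for every k > i. -/

import Mathlib

set_option maxHeartbeats 1000000

noncomputable section

/-- The unit interval `[0,1]` as a type. -/
abbrev I : Type := Set.Icc (0:ℝ) 1

/-- The underlying function of the generator `x₀` of Thompson's group `F`. -/
def x0fun (t : ℝ) : ℝ := if t ≤ 1/4 then 2*t else if t ≤ 1/2 then t + 1/4 else t/2 + 1/2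

/-- The inverse of `x0fun`. -/
def x0inv (t : ℝ) : ℝ := if t ≤ 1/2 then t/2 else if t ≤ 3/4 then t - 1/4 else 2*t - 1

/-- The underlying function of the generator `x₁` of Thompson's group `F`. -/
def x1fun (t : ℝ) : ℝ :=
  if t ≤ 1/2 then t else if t ≤ 5/8 then 2*t - 1/2 else if t ≤ 3/4 then t + 1/8 else t/2 + 1/2

/-- The inverse of `x1fun`. -/
def x1inv (t : ℝ) : ℝ :=
  if t ≤ 1/2 then t else if t ≤ 3/4 then t/2 + 1/4 else if t ≤ 7/8 then t - 1/8 else 2*t - 1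

/-- The generator `x₀` of Thompson's group `F`, as a bijection of `[0,1]`. -/
def x₀ : Equiv.Perm I where
  toFun t := ⟨x0fun t.1, by
    obtain ⟨h0, h1⟩ := Set.mem_Icc.mp t.2
    simp only [Set.mem_Icc, x0fun]
    split_ifs <;> constructor <;> linarith⟩
  invFun t := ⟨x0inv t.1, by
    obtain ⟨h0, h1⟩ := Set.mem_Icc.mp t.2
    simp only [Set.mem_Icc, x0inv]
    split_ifs <;> constructor <;> linarith⟩
  left_inv t := by
    obtain ⟨h0, h1⟩ := Set.mem_Icc.mp t.2
    apply Subtype.ext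
    show x0inv (x0fun t.1) = t.1
    simp only [x0fun, x0inv]
    split_ifs <;> linarith
  right_inv t := by
    obtain ⟨h0, h1⟩ := Set.mem_Icc.mp t.2
    apply Subtype.ext
    show x0fun (x0inv t.1) = t.1
    simp only [x0fun, x0inv]
    split_ifs <;> linarith

/-- The generator `x₁` of Thompson's group `F`, as a bijection of `[0,1]`. -/
def x₁ : Equiv.Perm I where
  toFun t := ⟨x1fun t.1, by
    obtain ⟨h0, h1⟩ := Set.mem_Icc.mp t.2
    simp only [Set.mem_Icc, x1fun]
    split_ifs <;> constructor <;> linarith⟩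
  invFun t := ⟨x1inv t.1, by
    obtain ⟨h0, h1⟩ := Set.mem_Icc.mp t.2
    simp only [Set.mem_Icc, x1inv]
    split_ifs <;> constructor <;> linarith⟩
  left_inv t := by
    obtain ⟨h0, h1⟩ := Set.mem_Icc.mp t.2
    apply Subtype.ext
    show x1inv (x1fun t.1) = t.1
    simp only [x1fun, x1inv]
    split_ifs <;> linarith
  right_inv t := by
    obtain ⟨h0, h1⟩ := Set.mem_Icc.mp t.2
    apply Subtype.ext
    show x1fun (x1inv t.1) = t.1
    simp only [x1fun, x1inv]
    split_ifs <;> linarith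

/-- Composition in Thompson's group `F` is from left to right: the product `f·g` in the paper
is the function `t ↦ g (f t)`.  In Lean, `Equiv.Perm` multiplication is composition from right
to left: `(f * g) t = f (g t)`.  Hence a paper product `a₁ a₂ ⋯ aₙ` corresponds to the Lean
product `aₙ * ⋯ * a₂ * a₁`.

`x i` is the standard generator `x_i` of Thompson's group `F`: here `x_0, x_1` are the explicit
piecewise-linear maps, and for `i ≥ 1`, `x_{i+1} = x_0^{-i} x_1 x_0^{i}` (left-to-right
composition), which in Lean's convention is `x₀ ^ i * x₁ * (x₀ ^ i)⁻¹`. -/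
def x (i : ℕ) : Equiv.Perm I := if i = 0 then x₀ else x₀ ^ (i-1) * x₁ * (x₀ ^ (i-1))⁻¹

/-- Thompson's group `F`, realized as the group of increasing piecewise-linear homeomorphisms of
`[0,1]` with dyadic breakpoints and slopes powers of 2; it is generated by `x_0` and `x_1`. -/
def F : Subgroup (Equiv.Perm I) := Subgroup.closure {x 0, x 1}

/-- The subgroup `G = ⟨x_0x_2, x_1x_2⟩` of `F` (products written left-to-right, so
`x_0x_2` is the Lean element `x 2 * x 0`). -/
def G : Subgroup (Equiv.Perm I) := Subgroup.closure {x 2 * x 0, x 2 * x 1}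

/-- Jones' subgroup `F⃗ = ⟨x_0x_1, x_1x_2, x_2x_3⟩` of `F` (products written left-to-right). -/
def JonesF : Subgroup (Equiv.Perm I) := Subgroup.closure {x 1 * x 0, x 2 * x 1, x 3 * x 2}

lemma x_mem_F (i : ℕ) : x i ∈ F := by
  have h0 : x 0 ∈ F := Subgroup.subset_closure (by simp)
  have h1 : x 1 ∈ F := Subgroup.subset_closure (by simp)
  have hx0 : x₀ ∈ F := by simpa [x] using h0
  have hx1 : x₁ ∈ F := by simpa [x] using h1
  rcases Nat.eq_zero_or_pos i with h | h
  · subst h; exact h0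
  · have : x i = x₀ ^ (i-1) * x₁ * (x₀ ^ (i-1))⁻¹ := by
      simp [x, Nat.pos_iff_ne_zero.mp h]
    rw [this]
    exact mul_mem (mul_mem (pow_mem hx0 _) hx1) (inv_mem (pow_mem hx0 _))

lemma y0_mem_G : x 2 * x 0 ∈ G := Subgroup.subset_closure (by simp)

lemma y1_mem_G : x 2 * x 1 ∈ G := Subgroup.subset_closure (by simp)

/-- The length `|w|` of an element of `F`: the minimal `n` such that `w` is a product of `n`
elements of `{x_i^{±1} : i ≥ 0}`.  This equals the length of the normal form of `w`. -/
def len (w : Equiv.Perm I) : ℕ :=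
  sInf {n | ∃ l : List (Equiv.Perm I), l.length = n ∧
    (∀ a ∈ l, ∃ i : ℕ, a = x i ∨ a = (x i)⁻¹) ∧ l.prod = w}

/-- The element of `F` given by the positive word `x_{i_1} x_{i_2} ⋯ x_{i_n}` (composition from
left to right), where `l = [i_1, i_2, …, i_n]`.  Since Lean's multiplication of permutations is
composition from right to left, this is the Lean product of the reversed list of letters. -/
def pp (l : List ℕ) : Equiv.Perm I := ((l.map x).reverse).prod

/-- `l = [i_1, …, i_n]` encodes a *block*: a positive normal form `x_{i_1}⋯x_{i_n}`
(so `i_1 ≤ ⋯ ≤ i_n`) with `i_1 ≠ i_n` and `i_j < i_1 + j` for all `j = 1, …, n`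
(here with 0-based indexing: `l[k] < l[0] + k + 1`). -/
def IsBlock (l : List ℕ) : Prop :=
  l ≠ [] ∧ l.Pairwise (· ≤ ·) ∧ l.headI ≠ l.getLastD 0 ∧
    ∀ k < l.length, l.getD k 0 < l.headI + k + 1

/-- The double coset `F⃗ a F⃗` of Jones' subgroup.  (As a set this does not depend on the
composition convention, since `u, v` range over all of `F⃗`.) -/
def dCoset (a : Equiv.Perm I) : Set (Equiv.Perm I) :=
  {w | ∃ u ∈ JonesF, ∃ v ∈ JonesF, w = v * a * u}

/-- A real number is dyadic if it has the form `a / 2^n` with `a, n` natural numbers. -/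
def IsDyadic (α : ℝ) : Prop := ∃ (a : ℕ) (n : ℕ), α = a / 2^n

/-- The subgroup of all permutations fixing every point of `U`. -/
def fixing (U : Set ℝ) : Subgroup (Equiv.Perm I) where
  carrier := {g | ∀ t : I, (t : ℝ) ∈ U → g t = t}
  one_mem' := fun _ _ => rfl
  mul_mem' := by
    intro a b ha hb t ht
    simp only [Equiv.Perm.mul_apply]
    rw [hb t ht, ha t ht]
  inv_mem' := by
    intro a ha t ht
    conv_lhs => rw [← ha t ht]
    exact Equiv.symm_apply_apply a t

/-- `H_U`: the stabilizer in `F` of the finite set `U ⊂ (0,1)`, i.e. the subgroup of all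
elements of `F` fixing every point of `U`. -/
def HU (U : Set ℝ) : Subgroup (Equiv.Perm I) := F ⊓ fixing U

/-! ### Auxiliary development for stmt5 -/

/-- The left endpoint of the support of `x m`. -/
def pnt (m : ℕ) : ℝ := 1 - (1/2)^m

lemma pnt_nonneg (m : ℕ) : 0 ≤ pnt m := by
  have h : (1/2:ℝ)^m ≤ 1 := pow_le_one₀ (by norm_num) (by norm_num)
  simp only [pnt]; linarith

lemma pnt_mono {m n : ℕ} (h : m ≤ n) : pnt m ≤ pnt n := by
  have h2 : (1/2:ℝ)^n ≤ (1/2)^m := pow_le_pow_of_le_one (by norm_num) (by norm_num) h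
  simp only [pnt]; linarith

lemma pnt_one : pnt 1 = 1/2 := by norm_num [pnt]

lemma pnt_two : pnt 2 = 3/4 := by norm_num [pnt]

lemma pnt_succ (m : ℕ) : pnt (m+1) = pnt m / 2 + 1/2 := by
  simp only [pnt, pow_succ]; ring

lemma pnt_succ' (m : ℕ) : pnt (m+1) = pnt m + (1/2)^(m+1) := by
  simp only [pnt, pow_succ]; ring

lemma pnt_one_half {m : ℕ} (h : 1 ≤ m) : (1/2:ℝ) ≤ pnt m :=
  pnt_one ▸ pnt_mono h

lemma half_pow_le {m : ℕ} (h : 1 ≤ m) : (1/2:ℝ)^m ≤ 1/2 := by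
  calc (1/2:ℝ)^m ≤ (1/2)^1 := pow_le_pow_of_le_one (by norm_num) (by norm_num) h
  _ = 1/2 := pow_one _

lemma x_one : x 1 = x₁ := by simp [x]

lemma x_zero : x 0 = x₀ := by simp [x]

lemma x_succ {m : ℕ} (hm : 1 ≤ m) : x (m+1) = x₀ * x m * x₀⁻¹ := by
  obtain ⟨m', rfl⟩ : ∃ m', m = m' + 1 := ⟨m - 1, by omega⟩
  have e1 : x (m'+1+1) = x₀^(m'+1) * x₁ * (x₀^(m'+1))⁻¹ := by simp [x]
  have e2 : x (m'+1) = x₀^(m') * x₁ * (x₀^(m'))⁻¹ := by simp [x]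
  rw [e1, e2, pow_succ']
  group

lemma x0_inv_apply (t : I) : ((x₀⁻¹ : Equiv.Perm I) t).1 = x0inv t.1 := rfl

lemma x0_apply (t : I) : (x₀ t).1 = x0fun t.1 := rfl

lemma x1_apply (t : I) : (x₁ t).1 = x1fun t.1 := rfl

/-- `x m` fixes `[0, pnt m]` pointwise, for `m ≥ 1`. -/
lemma fixB : ∀ m, 1 ≤ m → ∀ t : I, t.1 ≤ pnt m → x m t = t := by
  intro m
  induction m with
  | zero => intro h; omega
  | succ m ih =>
    rcases Nat.eq_zero_or_pos m with rfl | hm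
    · intro _ t ht
      rw [x_one]
      apply Subtype.ext
      show x1fun t.1 = t.1
      rw [pnt_one] at ht
      simp only [x1fun]
      split_ifs <;> linarith
    · intro _ t ht
      rw [x_succ hm]
      have hps : (1/2:ℝ)^(m+1) = (1/2)^m * (1/2) := pow_succ _ _
      have hm2 : (1/2:ℝ)^m ≤ 1/2 := half_pow_le hm
      have ht0 : 0 ≤ t.1 := t.2.1
      have hs : ((x₀⁻¹ : Equiv.Perm I) t).1 ≤ pnt m := by
        rw [x0_inv_apply]
        simp only [pnt] at ht ⊢
        simp only [x0inv]
        split_ifs <;> linarith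
      have h3 : x m ((x₀⁻¹ : Equiv.Perm I) t) = x₀⁻¹ t := ih hm _ hs
      show x₀ (x m (x₀⁻¹ t)) = t
      rw [h3]
      exact Equiv.apply_symm_apply x₀ t

/-- On `[pnt m, pnt m + (1/2)^m/8]`, `x m` acts by `t ↦ 2t - pnt m`. -/
lemma slopeA : ∀ m, ∀ t : I, pnt m ≤ t.1 → t.1 ≤ pnt m + (1/2)^m/8 →
    (x m t).1 = 2 * t.1 - pnt m := by
  intro m
  induction m with
  | zero =>
    intro t h1 h2
    rw [x_zero, x0_apply]
    simp only [pnt, pow_zero] at h1 h2 ⊢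
    simp only [x0fun]
    split_ifs <;> linarith
  | succ m ih =>
    rcases Nat.eq_zero_or_pos m with rfl | hm
    · intro t h1 h2
      rw [x_one, x1_apply]
      rw [pnt_one] at h1 h2 ⊢
      norm_num at h2
      simp only [x1fun]
      split_ifs <;> linarith
    · intro t h1 h2
      rw [x_succ hm]
      have hps : (1/2:ℝ)^(m+1) = (1/2)^m * (1/2) := pow_succ _ _
      have hm2 : (1/2:ℝ)^m ≤ 1/2 := half_pow_le hm
      have hsucc : pnt (m+1) = pnt m / 2 + 1/2 := pnt_succ m
      have hpm1 : (3/4:ℝ) ≤ pnt (m+1) := pnt_two ▸ pnt_mono (by omega)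
      have hph : (1/2:ℝ) ≤ pnt m := pnt_one_half hm
      have hppos : (0:ℝ) < (1/2)^m := by positivity
      have hs : ((x₀⁻¹ : Equiv.Perm I) t).1 = 2 * t.1 - 1 := by
        rw [x0_inv_apply]
        simp only [x0inv]
        split_ifs <;> linarith
      have hs1 : pnt m ≤ ((x₀⁻¹ : Equiv.Perm I) t).1 := by
        rw [hs]; linarith
      have hs2 : ((x₀⁻¹ : Equiv.Perm I) t).1 ≤ pnt m + (1/2)^m/8 := by
        rw [hs]; linarith
      have hmid := ih ((x₀⁻¹ : Equiv.Perm I) t) hs1 hs2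
      show (x₀ (x m (x₀⁻¹ t))).1 = 2 * t.1 - pnt (m+1)
      rw [x0_apply, hmid, hs]
      have hge : (1/2:ℝ) ≤ 2 * (2 * t.1 - 1) - pnt m := by linarith
      simp only [x0fun]
      split_ifs <;> linarith

lemma commute_disj (g h : Equiv.Perm I) (a : ℝ)
    (hg : ∀ t : I, a ≤ t.1 → g t = t) (hh : ∀ t : I, t.1 ≤ a → h t = t) :
    g * h = h * g := by
  ext t
  show (g (h t)).1 = (h (g t)).1
  rcases le_total t.1 a with hta | hta
  · rw [hh t hta]
    rcases le_total (g t).1 a with h2 | h2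
    · rw [hh _ h2]
    · have heq : g t = t := g.injective (hg _ h2)
      rw [heq, hh t hta]
  · rw [hg t hta]
    rcases le_total (h t).1 a with h2 | h2
    · have heq : h t = t := h.injective (hh _ h2)
      rw [heq, hg t hta]
    · rw [hg _ h2]

lemma keyrel {d : ℕ} (hd : 2 ≤ d) : x 1 * x d * (x 1)⁻¹ = x (d+1) := by
  have hg : ∀ t : I, (3/4:ℝ) ≤ t.1 → ((x₀⁻¹ * x₁ : Equiv.Perm I) t) = t := by
    intro t ht
    have ht1 : t.1 ≤ 1 := t.2.2
    apply Subtype.ext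
    show x0inv (x1fun t.1) = t.1
    simp only [x0inv, x1fun]
    split_ifs <;> linarith
  have hh : ∀ t : I, t.1 ≤ (3/4:ℝ) → x d t = t := by
    intro t ht
    exact fixB d (by omega) t (ht.trans (pnt_two ▸ pnt_mono hd))
  have hc := commute_disj (x₀⁻¹ * x₁) (x d) (3/4) hg hh
  rw [x_one]
  have hconj : x (d+1) = x₀ * x d * x₀⁻¹ := x_succ (by omega)
  rw [hconj]
  calc x₁ * x d * x₁⁻¹ = x₀ * ((x₀⁻¹ * x₁) * x d) * x₁⁻¹ := by group
  _ = x₀ * (x d * (x₀⁻¹ * x₁)) * x₁⁻¹ := by rw [hc]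
  _ = x₀ * x d * x₀⁻¹ := by group

/-- Commutation relation: for `a < b`, `x a * x b = x (b+1) * x a` (Lean convention). -/
lemma commrel : ∀ a b : ℕ, a < b → x a * x b = x (b+1) * x a := by
  intro a
  induction a with
  | zero =>
    intro b hb
    rw [x_zero, x_succ (by omega : 1 ≤ b)]
    group
  | succ a ih =>
    intro b hb
    rcases Nat.eq_zero_or_pos a with rfl | ha
    · have h := keyrel (show 2 ≤ b by omega)
      rw [← h]
      group
    · obtain ⟨b', rfl⟩ : ∃ b', b = b' + 1 := ⟨b - 1, by omega⟩
      have hb' : a < b' := by omega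
      have e1 : x (a+1) = x₀ * x a * x₀⁻¹ := x_succ ha
      have e2 : x (b'+1) = x₀ * x b' * x₀⁻¹ := x_succ (by omega)
      have e3 : x (b'+1+1) = x₀ * x (b'+1) * x₀⁻¹ := x_succ (by omega)
      have hih := ih b' hb'
      rw [e1, e3]
      calc (x₀ * x a * x₀⁻¹) * x (b'+1)
          = x₀ * (x a * x b') * x₀⁻¹ := by rw [e2]; group
      _ = x₀ * (x (b'+1) * x a) * x₀⁻¹ := by rw [hih]
      _ = (x₀ * x (b'+1) * x₀⁻¹) * (x₀ * x a * x₀⁻¹) := by group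

lemma pp_nil : pp [] = 1 := rfl

lemma pp_cons (a : ℕ) (t : List ℕ) : pp (a :: t) = pp t * x a := by
  simp [pp, List.prod_append]

/-- The "skip" relation holds when all letters are small enough. -/
lemma skip_of : ∀ (l : List ℕ) (i : ℕ), (∀ k < l.length, l.getD k 0 < i + k) →
    pp l * x i = x (i + l.length) * pp l := by
  intro l
  induction l with
  | nil => intro i _; simp [pp_nil]
  | cons a t ih =>
    intro i h
    have h0 : a < i := by simpa using h 0 (by simp)
    have ht : ∀ k < t.length, t.getD k 0 < (i+1) + k := by
      intro k hk
      have h2 := h (k+1) (by simp; omega)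
      simp only [List.getD_cons_succ] at h2
      omega
    have hcomm := commrel a i h0
    have hlen : i + (a :: t).length = (i+1) + t.length := by
      rw [List.length_cons]; omega
    rw [pp_cons, hlen]
    calc (pp t * x a) * x i = pp t * (x a * x i) := by group
    _ = pp t * (x (i+1) * x a) := by rw [hcomm]
    _ = (pp t * x (i+1)) * x a := by group
    _ = (x ((i+1) + t.length) * pp t) * x a := by rw [ih (i+1) ht]
    _ = x ((i+1) + t.length) * (pp t * x a) := by group

/-- Evaluation of a positive word with all letters `≥ j` near `pnt j`. -/
lemma eval (j : ℕ) : ∀ (l : List ℕ), (∀ m ∈ l, j ≤ m) → ∀ t : I,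
    pnt j ≤ t.1 → t.1 ≤ pnt j + (1/2)^j/8 / 2^l.length →
    (pp l t).1 = pnt j + 2^(l.count j) * (t.1 - pnt j) := by
  intro l
  induction l with
  | nil =>
    intro _ t h1 h2
    show t.1 = pnt j + 2^(List.count j []) * (t.1 - pnt j)
    simp only [List.count_nil, pow_zero]
    ring
  | cons a tl ih =>
    intro hge t h1 h2
    have hDpos : (0:ℝ) < (1/2)^j/8 := by positivity
    have hlpos : (1:ℝ) ≤ 2^tl.length := one_le_pow₀ (by norm_num)
    have hl2 : ((2:ℝ)^(a::tl).length) = 2^tl.length * 2 := by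
      rw [List.length_cons, pow_succ]
    have hstep : pp (a :: tl) t = pp tl (x a t) := by
      rw [pp_cons]; rfl
    have h2' : t.1 ≤ pnt j + (1/2)^j/8 := by
      have hmm : (1/2:ℝ)^j/8 / 2^(a::tl).length ≤ (1/2)^j/8 := by
        rw [div_le_iff₀ (by positivity)]
        nlinarith
      linarith
    rcases eq_or_lt_of_le (hge a List.mem_cons_self) with heq | hlt
    · -- a = j
      subst heq
      have hxa : (x j t).1 = 2 * t.1 - pnt j := slopeA j t h1 h2'
      have hb1 : pnt j ≤ (x j t).1 := by rw [hxa]; linarith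
      have hb2 : (x j t).1 ≤ pnt j + (1/2)^j/8 / 2^tl.length := by
        rw [hxa]
        rw [hl2] at h2
        have hh1 : t.1 - pnt j ≤ (1/2)^j/8 / (2^tl.length * 2) := by linarith
        rw [div_mul_eq_div_div] at hh1
        linarith
      have hihv := ih (fun m hm => hge m (List.mem_cons_of_mem _ hm)) (x j t) hb1 hb2
      rw [hstep, hihv, hxa]
      have hcnt : (j :: tl).count j = tl.count j + 1 := by
        simp [List.count_cons]
      rw [hcnt, pow_succ]
      ring
    · -- j < a
      have hfix : x a t = t := by
        apply fixB a (by omega) t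
        have hle : t.1 ≤ pnt (j+1) := by
          rw [pnt_succ']
          have h8 : (1/2:ℝ)^(j+1) = (1/2)^j/2 := by rw [pow_succ]; ring
          have h9 : (1/2:ℝ)^j/8 ≤ (1/2)^j/2 := by
            have : (0:ℝ) ≤ (1/2)^j := by positivity
            linarith
          linarith
        exact hle.trans (pnt_mono (by omega))
      have hcnt : (a :: tl).count j = tl.count j := by
        simp [List.count_cons, show ¬ j = a by omega, show ¬ a = j by omega]
      rw [hstep, hfix, hcnt]
      apply ih (fun m hm => hge m (List.mem_cons_of_mem _ hm)) t h1
      have hmono : (1/2:ℝ)^j/8 / 2^(a::tl).length ≤ (1/2)^j/8 / 2^tl.length := by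
        rw [hl2, div_mul_eq_div_div]
        exact div_le_self (by positivity) one_le_two
      linarith

/-- No skipping is possible if all letters are `≥ i`. -/
lemma no_skip (i : ℕ) (l : List ℕ) (hne : l ≠ []) (hge : ∀ m ∈ l, i ≤ m) :
    pp l * x i ≠ x (i + l.length) * pp l := by
  intro h
  set n := l.length with hn
  have hn1 : 1 ≤ n := List.length_pos_iff.mpr hne
  set D : ℝ := (1/2)^i/8 with hD
  have hDpos : (0:ℝ) < D := by rw [hD]; positivity
  have h2npos : (0:ℝ) < 2^n := by positivity
  have h2n : (1:ℝ) ≤ 2^n := one_le_pow₀ (by norm_num)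
  have h2n1 : ((2:ℝ)^(n+1)) = 2^n * 2 := pow_succ _ _
  have hεeq : D / 2^(n+1) = D / 2^n / 2 := by rw [h2n1, div_mul_eq_div_div]
  have hε : (0:ℝ) < D / 2^(n+1) := by positivity
  have hεε : D / 2^(n+1) ≤ D / 2^n := by
    rw [hεeq]
    exact div_le_self (by positivity) one_le_two
  have hεD : D / 2^n ≤ D := by
    rw [div_le_iff₀ h2npos]
    nlinarith
  have hppos : (0:ℝ) < (1/2)^i := by positivity
  have hp0 : 0 ≤ pnt i := pnt_nonneg i
  have hpd1 : pnt i + D ≤ 1 := by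
    rw [hD]; simp only [pnt]; linarith
  set t₀ : I := ⟨pnt i + D / 2^(n+1), by
    constructor
    · linarith
    · linarith⟩ with ht₀
  have hc : l.count i ≤ n := hn ▸ List.count_le_length
  have hcb : (2:ℝ)^(l.count i) ≤ 2^n := by
    apply pow_le_pow_right₀ (by norm_num) hc
  have hcpos : (0:ℝ) < 2^(l.count i) := by positivity
  have ht1 : pnt i ≤ t₀.1 := by
    show pnt i ≤ pnt i + D / 2^(n+1)
    linarith
  have ht2 : t₀.1 ≤ pnt i + D := by
    show pnt i + D / 2^(n+1) ≤ pnt i + D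
    linarith
  have hxi : (x i t₀).1 = 2 * t₀.1 - pnt i := slopeA i t₀ ht1 ht2
  have hxi' : (x i t₀).1 = pnt i + D / 2^n := by
    rw [hxi]
    show 2 * (pnt i + D / 2^(n+1)) - pnt i = pnt i + D / 2^n
    rw [hεeq]; ring
  have hLb1 : pnt i ≤ (x i t₀).1 := by rw [hxi']; linarith
  have hLb2 : (x i t₀).1 ≤ pnt i + D / 2^n := le_of_eq hxi'
  have hLHS : (pp l (x i t₀)).1 = pnt i + 2^(l.count i) * (D / 2^n) := by
    rw [eval i l hge (x i t₀) hLb1 hLb2, hxi']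
    ring
  have hb2 : t₀.1 ≤ pnt i + D / 2^n := by
    show pnt i + D / 2^(n+1) ≤ pnt i + D / 2^n
    linarith
  have hRmid : (pp l t₀).1 = pnt i + 2^(l.count i) * (D / 2^(n+1)) := by
    rw [eval i l hge t₀ ht1 hb2]
    show pnt i + 2^(l.count i) * ((pnt i + D / 2^(n+1)) - pnt i)
        = pnt i + 2^(l.count i) * (D / 2^(n+1))
    ring
  have hRfix : x (i+n) (pp l t₀) = pp l t₀ := by
    apply fixB (i+n) (by omega)
    rw [hRmid]
    have hbound : (2:ℝ)^(l.count i) * (D / 2^(n+1)) ≤ D := by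
      rw [hεeq, div_div]
      rw [mul_div_assoc']
      rw [div_le_iff₀ (by positivity)]
      nlinarith
    have hD2 : pnt i + D ≤ pnt (i+n) := by
      have hmn : pnt (i+1) ≤ pnt (i+n) := pnt_mono (by omega)
      have hps := pnt_succ' i
      have h8 : (1/2:ℝ)^(i+1) = (1/2)^i/2 := by rw [pow_succ]; ring
      rw [hD]
      linarith
    linarith
  have hev : (pp l (x i t₀)).1 = (x (i+n) (pp l t₀)).1 := by
    have hcongr := congrArg (fun f : Equiv.Perm I => (f t₀).1) h
    simpa [Equiv.Perm.mul_apply] using hcongr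
  rw [hLHS, hRfix, hRmid] at hev
  have hlt : D / 2^(n+1) < D / 2^n := by
    rw [hεeq]
    have hpos : 0 < D / 2^n := by positivity
    linarith
  nlinarith

/-- The forward direction of the skipping criterion. -/
lemma skip_to : ∀ (l : List ℕ), l.Pairwise (· ≤ ·) → ∀ i : ℕ,
    pp l * x i = x (i + l.length) * pp l → ∀ k < l.length, l.getD k 0 < i + k := by
  intro l
  induction l with
  | nil => intro _ i _ k hk; simp at hk
  | cons a t ih =>
    intro hl i h
    rw [List.pairwise_cons] at hl
    rcases lt_or_ge a i with ha | ha
    · have hcomm := commrel a i ha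
      have hlen : i + (a :: t).length = (i+1) + t.length := by
        rw [List.length_cons]; omega
      have hx : pp t * x (i+1) * x a = x ((i+1) + t.length) * pp t * x a := by
        calc pp t * x (i+1) * x a = pp t * (x (i+1) * x a) := by group
        _ = pp t * (x a * x i) := by rw [← hcomm]
        _ = pp (a::t) * x i := by rw [pp_cons]; group
        _ = x (i + (a::t).length) * pp (a::t) := h
        _ = x ((i+1) + t.length) * pp t * x a := by rw [hlen, pp_cons]; group
      have h2 : pp t * x (i+1) = x ((i+1) + t.length) * pp t := mul_right_cancel hx
      have ht := ih hl.2 (i+1) h2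
      intro k hk
      match k with
      | 0 => simpa using ha
      | (k+1) =>
        have hk' : k < t.length := by
          rw [List.length_cons] at hk; omega
        have h3 := ht k hk'
        simp only [List.getD_cons_succ]
        omega
    · exfalso
      apply no_skip i (a :: t) (by simp) _ h
      intro m hm
      rcases List.mem_cons.mp hm with rfl | hm'
      · exact ha
      · exact ha.trans (hl.1 m hm')

/-- Let `w = x_{i_1}⋯x_{i_n}` be a positive normal form (`i_1 ≤ ⋯ ≤ i_n`,
encoded by the list `l = [i_1, …, i_n]`) and let `i ≥ 0`.  Then `x_i` skips over `w`
(i.e. `x_i w = w x_{i+n}` in `F`; in Lean's right-to-left convention, `pp l * x i =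
x (i + n) * pp l`) if and only if `i_j < i + j - 1` for all `j = 1, …, n` (with 0-based
indexing: `l[k] < i + k` for all `k < n`).  Consequently, if `x_i` skips over `w` then so does
`x_k` for every `k > i`. -/
theorem stmt5 (l : List ℕ) (hl : l.Pairwise (· ≤ ·)) (i : ℕ) :
    (pp l * x i = x (i + l.length) * pp l ↔ ∀ k < l.length, l.getD k 0 < i + k) ∧
    (pp l * x i = x (i + l.length) * pp l →
      ∀ k, i < k → pp l * x k = x (k + l.length) * pp l) := by
  constructor
  · constructor
    · exact skip_to l hl i
    · exact skip_of l i
  · intro h k hk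
    apply skip_of
    intro k' hk'
    have := skip_to l hl i h k' hk'
    omega
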